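/- For all integers i, k ≥ 0 and n ≥ 2: ((a(i,k) : ℝ) − b(i,k))·((a(i,k) : ℝ) − L(n,k)·b(i,k)) ≤ 1. -/

import Mathlib

/-- Pell numbers: P 0 = 0, P 1 = 1, P (m+2) = 2·P (m+1) + P m. -/
def pell : ℕ → ℕ
  | 0 => 0
  | 1 => 1
  | m + 2 => 2 * pell (m + 1) + pell m

/-- Half-companion Pell numbers: H 0 = 1, H 1 = 1, H (m+2) = 2·H (m+1) + H m. -/
def hpell : ℕ → ℕ
  | 0 => 1
  | 1 => 1
  | m + 2 => 2 * hpell (m + 1) + hpell m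

/-- The solution of x 0 = x0, x 1 = x1, x (i+2) = 2n·x (i+1) − x i. -/
def rec2 (n : ℕ) (x0 x1 : ℤ) : ℕ → ℤ
  | 0 => x0
  | 1 => x1
  | i + 2 => 2 * n * rec2 n x0 x1 (i + 1) - rec2 n x0 x1 i

/-- a i : a 0 = 1, a 1 = n. -/
def sa (n : ℕ) : ℕ → ℤ := rec2 n 1 n
/-- b i : b 0 = 0, b 1 = 1. -/
def sb (n : ℕ) : ℕ → ℤ := rec2 n 0 1
/-- c i : c 0 = 1, c 1 = 2n+1. -/
def sc (n : ℕ) : ℕ → ℤ := rec2 n 1 (2 * n + 1)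
/-- d i : d 0 = 1, d 1 = 1. -/
def sd (n : ℕ) : ℕ → ℤ := rec2 n 1 1

/-- X(i,k) = H(2k)·(a i + b i) + 2·P(2k)·n·(b i). -/
def XX (n i k : ℕ) : ℤ :=
  (hpell (2*k) : ℤ) * (sa n i + sb n i) + 2 * (pell (2*k) : ℤ) * n * sb n i

/-- Δ(i,k) = P(2k)·(a i + b i) + H(2k)·n·(b i). -/
def DD (n i k : ℕ) : ℤ :=
  (pell (2*k) : ℤ) * (sa n i + sb n i) + (hpell (2*k) : ℤ) * n * sb n i

/-- a(i,k) = (X(i,k) + (a i − b i))/2. -/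
def aik (n i k : ℕ) : ℤ := (XX n i k + (sa n i - sb n i)) / 2
/-- b(i,k) = (X(i,k) − (a i − b i))/2. -/
def bik (n i k : ℕ) : ℤ := (XX n i k - (sa n i - sb n i)) / 2
/-- c(i,k) = X(i,k) + Δ(i,k). -/
def cik (n i k : ℕ) : ℤ := XX n i k + DD n i k
/-- d(i,k) = X(i,k) − Δ(i,k). -/
def dik (n i k : ℕ) : ℤ := XX n i k - DD n i k

/-- √(n²−1). -/
noncomputable def sqn (n : ℕ) : ℝ := Real.sqrt ((n : ℝ)^2 - 1)

/-- ω = n + √(n²−1). -/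
noncomputable def om (n : ℕ) : ℝ := n + sqn n

/-- L(n,k) = (H(2k)·(√(n²−1)+1) + 2n·P(2k) + (√(n²−1)−1)) /
(H(2k)·(√(n²−1)+1) + 2n·P(2k) − (√(n²−1)−1)). -/
noncomputable def L (n k : ℕ) : ℝ :=
  ((hpell (2*k) : ℝ) * (sqn n + 1) + 2*n*(pell (2*k) : ℝ) + (sqn n - 1)) /
  ((hpell (2*k) : ℝ) * (sqn n + 1) + 2*n*(pell (2*k) : ℝ) - (sqn n - 1))

/-- S(n,0) = (√(n²−1)+1+n)/(√(n²−1)+1−n); for k ≥ 1,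
S(n,k) = ((√(n²−1)+1)·P(2k+1) + n·H(2k+1)) / ((√(n²−1)+1)·P(2k−1) + n·H(2k−1)). -/
noncomputable def S (n k : ℕ) : ℝ :=
  if k = 0 then (sqn n + 1 + n) / (sqn n + 1 - n)
  else ((sqn n + 1) * (pell (2*k+1) : ℝ) + n * (hpell (2*k+1) : ℝ)) /
       ((sqn n + 1) * (pell (2*k-1) : ℝ) + n * (hpell (2*k-1) : ℝ))

lemma hpell_odd : ∀ m, hpell m % 2 = 1
  | 0 => rfl
  | 1 => rfl
  | m + 2 => by
    have h1 := hpell_odd (m+1)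
    have h2 := hpell_odd m
    simp only [hpell]
    omega

lemma hpell_pos : ∀ m, 1 ≤ hpell m
  | 0 => le_refl 1
  | 1 => le_refl 1
  | m + 2 => by
    have h1 := hpell_pos (m+1)
    have h2 := hpell_pos m
    simp only [hpell]
    omega

lemma rec2_step (n : ℕ) (x0 x1 : ℤ) (i : ℕ) :
    rec2 n x0 x1 (i+2) = 2*n*rec2 n x0 x1 (i+1) - rec2 n x0 x1 i := rfl

lemma sab_step (n : ℕ) : ∀ i,
    sa n (i+1) = n * sa n i + ((n:ℤ)^2 - 1) * sb n i ∧
    sb n (i+1) = sa n i + n * sb n i := by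
  intro i
  induction i with
  | zero => constructor <;> simp [sa, sb, rec2]
  | succ i ih =>
    obtain ⟨h1, h2⟩ := ih
    have ea : sa n (i+2) = 2*n*sa n (i+1) - sa n i := rec2_step n 1 n i
    have eb : sb n (i+2) = 2*n*sb n (i+1) - sb n i := rec2_step n 0 1 i
    constructor
    · rw [ea]; linear_combination (n:ℤ) * h1 - ((n:ℤ)^2 - 1) * h2
    · rw [eb]; linear_combination (n:ℤ) * h2 - h1

lemma sab_facts (n : ℕ) (hn : 2 ≤ n) : ∀ i, 1 ≤ sa n i ∧ 0 ≤ sb n i ∧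
    (sa n i)^2 - ((n:ℤ)^2 - 1)*(sb n i)^2 = 1 := by
  have hn' : (2:ℤ) ≤ (n:ℤ) := by exact_mod_cast hn
  intro i
  induction i with
  | zero =>
    refine ⟨?_, ?_, ?_⟩ <;> norm_num [sa, sb, rec2]
  | succ i ih =>
    obtain ⟨ha, hb, hnorm⟩ := ih
    obtain ⟨h1, h2⟩ := sab_step n i
    refine ⟨?_, ?_, ?_⟩
    · rw [h1]; nlinarith [mul_nonneg (by nlinarith : (0:ℤ) ≤ (n:ℤ)^2 - 1) hb]
    · rw [h2]; nlinarith [mul_nonneg (by linarith : (0:ℤ) ≤ (n:ℤ)) hb]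
    · rw [h1, h2]; linear_combination hnorm

lemma two_mul_aik (n i k : ℕ) : 2 * aik n i k = XX n i k + (sa n i - sb n i) := by
  obtain ⟨m, hm⟩ : ∃ m, hpell (2*k) = 2*m + 1 := ⟨hpell (2*k)/2, by have := hpell_odd (2*k); omega⟩
  have hdvd : (2:ℤ) ∣ XX n i k + (sa n i - sb n i) := by
    refine ⟨(m:ℤ)*(sa n i + sb n i) + sa n i + (pell (2*k):ℤ)*(n:ℤ)*(sb n i), ?_⟩
    simp only [XX, hm]
    push_cast
    ring
  rw [aik]
  exact Int.mul_ediv_cancel' hdvd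

lemma two_mul_bik (n i k : ℕ) : 2 * bik n i k = XX n i k - (sa n i - sb n i) := by
  obtain ⟨m, hm⟩ : ∃ m, hpell (2*k) = 2*m + 1 := ⟨hpell (2*k)/2, by have := hpell_odd (2*k); omega⟩
  have hdvd : (2:ℤ) ∣ XX n i k - (sa n i - sb n i) := by
    refine ⟨(m:ℤ)*(sa n i + sb n i) + sb n i + (pell (2*k):ℤ)*(n:ℤ)*(sb n i), ?_⟩
    simp only [XX, hm]
    push_cast
    ring
  rw [bik]
  exact Int.mul_ediv_cancel' hdvd

set_option maxHeartbeats 1000000 in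
theorem stmt_8 (n i k : ℕ) (hn : 2 ≤ n) :
    ((aik n i k : ℝ) - (bik n i k : ℝ)) * ((aik n i k : ℝ) - L n k * (bik n i k : ℝ)) ≤ 1 := by
  have hn2 : (2:ℝ) ≤ (n:ℝ) := by exact_mod_cast hn
  set w : ℝ := sqn n with hw
  have hnn : (0:ℝ) ≤ (n:ℝ)^2 - 1 := by nlinarith
  have hw2 : w^2 = (n:ℝ)^2 - 1 := Real.sq_sqrt hnn
  have hwnn : 0 ≤ w := Real.sqrt_nonneg _
  have hw1 : 1 ≤ w := by nlinarith
  obtain ⟨hai, hbi, hni⟩ := sab_facts n hn i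
  have ha1 : (1:ℝ) ≤ (sa n i : ℝ) := by exact_mod_cast hai
  have hb0 : (0:ℝ) ≤ (sb n i : ℝ) := by exact_mod_cast hbi
  have hnormR : ((sa n i : ℝ))^2 - ((n:ℝ)^2 - 1)*((sb n i : ℝ))^2 = 1 := by
    have h2 : ((((sa n i)^2 - ((n:ℤ)^2 - 1)*(sb n i)^2 : ℤ)) : ℝ) = ((1:ℤ) : ℝ) := by rw [hni]
    push_cast at h2
    linarith
  have hH1 : (1:ℝ) ≤ (hpell (2*k) : ℝ) := by exact_mod_cast hpell_pos (2*k)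
  have hP0 : (0:ℝ) ≤ (pell (2*k) : ℝ) := Nat.cast_nonneg _
  -- abbreviations
  -- cast values of aik, bik
  have hA : (aik n i k : ℝ) = (((hpell (2*k) : ℝ))*(((sa n i : ℝ))+((sb n i : ℝ))) + 2*((pell (2*k) : ℝ))*(n:ℝ)*((sb n i : ℝ)) + (((sa n i : ℝ)) - ((sb n i : ℝ))))/2 := by
    have h := congrArg (fun z : ℤ => (z : ℝ)) (two_mul_aik n i k)
    simp only [XX] at h
    push_cast at h
    linarith
  have hB : (bik n i k : ℝ) = (((hpell (2*k) : ℝ))*(((sa n i : ℝ))+((sb n i : ℝ))) + 2*((pell (2*k) : ℝ))*(n:ℝ)*((sb n i : ℝ)) - (((sa n i : ℝ)) - ((sb n i : ℝ))))/2 := by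
    have h := congrArg (fun z : ℤ => (z : ℝ)) (two_mul_bik n i k)
    simp only [XX] at h
    push_cast at h
    linarith
  have hMs : 0 < ((hpell (2*k) : ℝ))*(w+1) + 2*(n:ℝ)*((pell (2*k) : ℝ)) - (w - 1) := by
    nlinarith [mul_nonneg (by linarith : (0:ℝ) ≤ w) (by linarith : (0:ℝ) ≤ ((hpell (2*k) : ℝ)) - 1),
      mul_nonneg (by linarith : (0:ℝ) ≤ (n:ℝ)) hP0]
  have hL : L n k = (((hpell (2*k) : ℝ))*(w+1) + 2*(n:ℝ)*((pell (2*k) : ℝ)) + (w - 1)) / (((hpell (2*k) : ℝ))*(w+1) + 2*(n:ℝ)*((pell (2*k) : ℝ)) - (w - 1)) := by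
    simp only [L, ← hw]
  have key : ((aik n i k : ℝ) - (bik n i k : ℝ)) * ((aik n i k : ℝ) - L n k * (bik n i k : ℝ))
      = ((((sa n i : ℝ)) - ((sb n i : ℝ)))*(((sa n i : ℝ)) - w*((sb n i : ℝ)))) * (2*(((hpell (2*k) : ℝ)) + (n:ℝ)*((pell (2*k) : ℝ)))/(((hpell (2*k) : ℝ))*(w+1) + 2*(n:ℝ)*((pell (2*k) : ℝ)) - (w - 1))) := by
    rw [hA, hB, hL]
    set D := ((hpell (2*k) : ℝ))*(w+1) + 2*(n:ℝ)*((pell (2*k) : ℝ)) - (w - 1) with hD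
    have hD0 : D ≠ 0 := hMs.ne'
    field_simp
    rw [hD]
    ring
  rw [key]
  -- bounds
  have ht0 : 0 < ((sa n i : ℝ)) + w*((sb n i : ℝ)) := by nlinarith [mul_nonneg hwnn hb0]
  have hinv : (((sa n i : ℝ)) - w*((sb n i : ℝ)))*(((sa n i : ℝ)) + w*((sb n i : ℝ))) = 1 := by linear_combination hnormR - ((sb n i : ℝ))^2 * hw2
  have hawb : ((sa n i : ℝ)) - w*((sb n i : ℝ)) = 1/(((sa n i : ℝ)) + w*((sb n i : ℝ))) := by
    rw [eq_div_iff ht0.ne']; exact hinv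
  have hawb_pos : 0 < ((sa n i : ℝ)) - w*((sb n i : ℝ)) := by rw [hawb]; positivity
  have hDnn : 0 ≤ ((sa n i : ℝ)) - ((sb n i : ℝ)) := by
    nlinarith [mul_nonneg (by linarith : (0:ℝ) ≤ w - 1) hb0]
  have ht1 : (((sa n i : ℝ)) - ((sb n i : ℝ)))*(((sa n i : ℝ)) - w*((sb n i : ℝ))) ≤ 1 := by
    have h1 : (((sa n i : ℝ)) - ((sb n i : ℝ)))*(((sa n i : ℝ)) - w*((sb n i : ℝ))) ≤ (((sa n i : ℝ)) + w*((sb n i : ℝ)))*(((sa n i : ℝ)) - w*((sb n i : ℝ))) := by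
      apply mul_le_mul_of_nonneg_right _ hawb_pos.le
      nlinarith [mul_nonneg (by linarith : (0:ℝ) ≤ w + 1) hb0]
    calc (((sa n i : ℝ)) - ((sb n i : ℝ)))*(((sa n i : ℝ)) - w*((sb n i : ℝ))) ≤ (((sa n i : ℝ)) + w*((sb n i : ℝ)))*(((sa n i : ℝ)) - w*((sb n i : ℝ))) := h1
      _ = 1 := by linear_combination hinv
  have hr1 : 2*(((hpell (2*k) : ℝ)) + (n:ℝ)*((pell (2*k) : ℝ)))/(((hpell (2*k) : ℝ))*(w+1) + 2*(n:ℝ)*((pell (2*k) : ℝ)) - (w - 1)) ≤ 1 := by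
    rw [div_le_one hMs]
    nlinarith [mul_nonneg (by linarith : (0:ℝ) ≤ w - 1) (by linarith : (0:ℝ) ≤ ((hpell (2*k) : ℝ)) - 1)]
  have hr0 : 0 ≤ 2*(((hpell (2*k) : ℝ)) + (n:ℝ)*((pell (2*k) : ℝ)))/(((hpell (2*k) : ℝ))*(w+1) + 2*(n:ℝ)*((pell (2*k) : ℝ)) - (w - 1)) := by
    apply div_nonneg _ hMs.le
    nlinarith [mul_nonneg (by linarith : (0:ℝ) ≤ (n:ℝ)) hP0]
  calc ((((sa n i : ℝ)) - ((sb n i : ℝ)))*(((sa n i : ℝ)) - w*((sb n i : ℝ)))) * (2*(((hpell (2*k) : ℝ)) + (n:ℝ)*((pell (2*k) : ℝ)))/(((hpell (2*k) : ℝ))*(w+1) + 2*(n:ℝ)*((pell (2*k) : ℝ)) - (w - 1)))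
      ≤ 1 * 1 := mul_le_mul ht1 hr1 hr0 zero_le_one
    _ = 1 := by norm_num
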